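/- Let ℙ be an atomless probability measure and 0 ≤ k₁ < 1 < k₂ constants, and 𝓟(ℙ,k₁,k₂) = {ℚ ≪ ℙ : k₁ ≤ dℚ/dℙ ≤ k₂}. Then for every A ∈ 𝓕, sup_{ℚ ∈ 𝓟(ℙ,k₁,k₂)} ℚ(A) = g(ℙ(A)) where g(x) = min(k₂·x, k₁·x + 1 − k₁). Consequently, for every increasing Λ: ℝ → (0,1), sup_{ℚ ∈ 𝓟(ℙ,k₁,k₂)} ΛVaR^ℚ(X) = (g⁻¹ ∘ Λ)VaR^ℙ(X) for all random variables X, where g⁻¹ is the inverse of g on [0,1]. -/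

import Mathlib

open Set MeasureTheory
open scoped ENNReal Classical

/-- Lambda Value-at-Risk of `X` with respect to a capacity `w` and function `Λ`:
`inf {x ∈ ℝ : w(X > x) ≤ Λ(x)}`, valued in the extended reals (`inf ∅ = ⊤`). -/
noncomputable def LVaR {Ω : Type*} (w : Set Ω → ℝ) (Λ : ℝ → ℝ) (X : Ω → ℝ) : EReal :=
  sInf ((fun x : ℝ => (x : EReal)) '' {x : ℝ | w {ω | x < X ω} ≤ Λ x})

private lemma toReal_compl {Ω : Type*} [MeasurableSpace Ω] (μ : Measure Ω)
    [IsProbabilityMeasure μ] {A : Set Ω} (hA : MeasurableSet A) :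
    (μ Aᶜ).toReal = 1 - (μ A).toReal := by
  have h := measure_compl hA (measure_ne_top μ A)
  rw [measure_univ] at h
  rw [h, ENNReal.toReal_sub_of_le prob_le_one ENNReal.one_ne_top, ENNReal.toReal_one]

private lemma lvar_upper {Ω : Type*} [MeasurableSpace Ω] {ℙ Q : Measure Ω}
    [IsProbabilityMeasure ℙ] [IsProbabilityMeasure Q] {k : ℝ} (hk : 0 ≤ k)
    (hQP : Q ≪ ℙ) (hbd : ∀ᵐ ω ∂ℙ, (Q.rnDeriv ℙ ω).toReal ≤ k)
    {B : Set Ω} (hB : MeasurableSet B) :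
    (Q B).toReal ≤ k * (ℙ B).toReal := by
  have h1 : Q B = ∫⁻ ω in B, Q.rnDeriv ℙ ω ∂ℙ := (Measure.setLIntegral_rnDeriv hQP B).symm
  have h2 : ∀ᵐ ω ∂ℙ, Q.rnDeriv ℙ ω ≤ ENNReal.ofReal k := by
    filter_upwards [hbd, Measure.rnDeriv_lt_top Q ℙ] with ω h ht
    rw [← ENNReal.ofReal_toReal ht.ne]
    exact ENNReal.ofReal_le_ofReal h
  have h3 : Q B ≤ ENNReal.ofReal k * ℙ B := by
    rw [h1, ← setLIntegral_const]
    exact setLIntegral_mono_ae' hB (h2.mono fun ω h _ => h)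
  calc (Q B).toReal ≤ (ENNReal.ofReal k * ℙ B).toReal :=
        ENNReal.toReal_mono (ENNReal.mul_ne_top ENNReal.ofReal_ne_top (measure_ne_top _ _)) h3
    _ = k * (ℙ B).toReal := by rw [ENNReal.toReal_mul, ENNReal.toReal_ofReal hk]

private lemma lvar_lower {Ω : Type*} [MeasurableSpace Ω] {ℙ Q : Measure Ω}
    [IsProbabilityMeasure ℙ] [IsProbabilityMeasure Q] {k : ℝ} (hk : 0 ≤ k)
    (hQP : Q ≪ ℙ) (hbd : ∀ᵐ ω ∂ℙ, k ≤ (Q.rnDeriv ℙ ω).toReal)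
    {B : Set Ω} (hB : MeasurableSet B) :
    k * (ℙ B).toReal ≤ (Q B).toReal := by
  have h1 : Q B = ∫⁻ ω in B, Q.rnDeriv ℙ ω ∂ℙ := (Measure.setLIntegral_rnDeriv hQP B).symm
  have h2 : ∀ᵐ ω ∂ℙ, ENNReal.ofReal k ≤ Q.rnDeriv ℙ ω := by
    filter_upwards [hbd, Measure.rnDeriv_lt_top Q ℙ] with ω h ht
    rw [← ENNReal.ofReal_toReal ht.ne]
    exact ENNReal.ofReal_le_ofReal h
  have h3 : ENNReal.ofReal k * ℙ B ≤ Q B := by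
    rw [h1, ← setLIntegral_const]
    exact setLIntegral_mono_ae' hB (h2.mono fun ω h _ => h)
  calc k * (ℙ B).toReal = (ENNReal.ofReal k * ℙ B).toReal := by
        rw [ENNReal.toReal_mul, ENNReal.toReal_ofReal hk]
    _ ≤ (Q B).toReal := ENNReal.toReal_mono (measure_ne_top _ _) h3

/-- The key two-sided bound: any `Q ∈ 𝓟(ℙ,k₁,k₂)` satisfies `Q(A) ≤ g(ℙ(A))`. -/
private lemma Q_le_minbound {Ω : Type*} [MeasurableSpace Ω] {ℙ Q : Measure Ω}
    [IsProbabilityMeasure ℙ] (hQprob : IsProbabilityMeasure Q) {k₁ k₂ : ℝ}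
    (hk₁ : 0 ≤ k₁) (hk₂0 : 0 ≤ k₂) (hQac : Q ≪ ℙ)
    (hQbd : ∀ᵐ ω ∂ℙ, k₁ ≤ (Q.rnDeriv ℙ ω).toReal ∧ (Q.rnDeriv ℙ ω).toReal ≤ k₂)
    {A : Set Ω} (hA : MeasurableSet A) :
    (Q A).toReal ≤ min (k₂ * (ℙ A).toReal) (k₁ * (ℙ A).toReal + 1 - k₁) := by
  haveI := hQprob
  refine le_min (lvar_upper hk₂0 hQac (hQbd.mono fun ω h => h.2) hA) ?_
  have h1 : k₁ * (ℙ Aᶜ).toReal ≤ (Q Aᶜ).toReal :=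
    lvar_lower hk₁ hQac (hQbd.mono fun ω h => h.1) hA.compl
  have h2 := toReal_compl Q hA
  have h3 := toReal_compl ℙ hA
  rw [h3] at h1
  nlinarith [h1, h2]

/-- Construction of a measure in `𝓟` with prescribed two-valued density. -/
private lemma construct_Q {Ω : Type*} [MeasurableSpace Ω] (ℙ : Measure Ω)
    [IsProbabilityMeasure ℙ] {k₁ : ℝ} (hk₁ : 0 ≤ k₁)
    {A : Set Ω} (hA : MeasurableSet A) {a b : ℝ}
    (ha1 : k₁ ≤ a) (hb1 : k₁ ≤ b)
    (hsum : a * (ℙ A).toReal + b * (ℙ Aᶜ).toReal = 1) :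
    ∃ Q : Measure Ω, IsProbabilityMeasure Q ∧ Q ≪ ℙ ∧
      (∀ᵐ ω ∂ℙ, (Q.rnDeriv ℙ ω).toReal = if ω ∈ A then a else b) ∧
      (Q A).toReal = a * (ℙ A).toReal := by
  have ha0 : 0 ≤ a := hk₁.trans ha1
  have hb0 : 0 ≤ b := hk₁.trans hb1
  set f : Ω → ℝ≥0∞ := fun ω => ENNReal.ofReal (if ω ∈ A then a else b) with hf
  have hfm : Measurable f :=
    (Measurable.ite hA measurable_const measurable_const).ennreal_ofReal
  have hQA : (ℙ.withDensity f) A = ENNReal.ofReal a * ℙ A := by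
    have h : ∫⁻ ω in A, f ω ∂ℙ = ∫⁻ _ in A, ENNReal.ofReal a ∂ℙ :=
      setLIntegral_congr_fun hA (fun ω hω => by simp [hf, hω])
    rw [withDensity_apply f hA, h, setLIntegral_const]
  have hQAc : (ℙ.withDensity f) Aᶜ = ENNReal.ofReal b * ℙ Aᶜ := by
    have h : ∫⁻ ω in Aᶜ, f ω ∂ℙ = ∫⁻ _ in Aᶜ, ENNReal.ofReal b ∂ℙ :=
      setLIntegral_congr_fun hA.compl
        (fun ω hω => by simp [hf, (mem_compl_iff _ _).mp hω])
    rw [withDensity_apply f hA.compl, h, setLIntegral_const]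
  have huniv : (ℙ.withDensity f) univ = 1 := by
    rw [← measure_add_measure_compl (μ := ℙ.withDensity f) hA, hQA, hQAc]
    have hPA : ℙ A = ENNReal.ofReal (ℙ A).toReal :=
      (ENNReal.ofReal_toReal (measure_ne_top _ _)).symm
    have hPAc : ℙ Aᶜ = ENNReal.ofReal (ℙ Aᶜ).toReal :=
      (ENNReal.ofReal_toReal (measure_ne_top _ _)).symm
    rw [hPA, hPAc, ← ENNReal.ofReal_mul ha0, ← ENNReal.ofReal_mul hb0,
      ← ENNReal.ofReal_add (by positivity) (by positivity), hsum, ENNReal.ofReal_one]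
  refine ⟨ℙ.withDensity f, ⟨huniv⟩, withDensity_absolutelyContinuous ℙ f, ?_, ?_⟩
  · filter_upwards [Measure.rnDeriv_withDensity ℙ hfm] with ω h
    rw [h, hf]
    by_cases hω : ω ∈ A <;> simp [hω, ENNReal.toReal_ofReal, ha0, hb0]
  · rw [hQA, ENNReal.toReal_mul, ENNReal.toReal_ofReal ha0]

/-- Achievability: there is `Q ∈ 𝓟(ℙ,k₁,k₂)` with `Q(A) = g(ℙ(A))`. -/
private lemma exists_opt {Ω : Type*} [MeasurableSpace Ω] (ℙ : Measure Ω)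
    [IsProbabilityMeasure ℙ] {k₁ k₂ : ℝ} (hk₁ : 0 ≤ k₁) (hk₁1 : k₁ < 1) (hk₂ : 1 < k₂)
    {A : Set Ω} (hA : MeasurableSet A) :
    ∃ Q : Measure Ω, IsProbabilityMeasure Q ∧ Q ≪ ℙ ∧
      (∀ᵐ ω ∂ℙ, k₁ ≤ (Q.rnDeriv ℙ ω).toReal ∧ (Q.rnDeriv ℙ ω).toReal ≤ k₂) ∧
      (Q A).toReal = min (k₂ * (ℙ A).toReal) (k₁ * (ℙ A).toReal + 1 - k₁) := by
  set p := (ℙ A).toReal with hp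
  have hpq : (ℙ Aᶜ).toReal = 1 - p := toReal_compl ℙ hA
  have hp0 : 0 ≤ p := ENNReal.toReal_nonneg
  have hp1 : p ≤ 1 := by
    have := ENNReal.toReal_nonneg (a := ℙ Aᶜ); linarith [hpq]
  by_cases hc : k₂ * p ≤ k₁ * p + 1 - k₁
  · -- optimal value is k₂ * p
    have hplt : p < 1 := by nlinarith
    set b := (1 - k₂ * p) / (1 - p) with hb
    have hq : (0:ℝ) < 1 - p := by linarith
    have hbk₁ : k₁ ≤ b := by
      rw [hb, le_div_iff₀ hq]; nlinarith
    have hbk₂ : b ≤ k₂ := by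
      rw [hb, div_le_iff₀ hq]; nlinarith
    have hsum : k₂ * (ℙ A).toReal + b * (ℙ Aᶜ).toReal = 1 := by
      rw [hpq, ← hp, hb, div_mul_cancel₀ _ (ne_of_gt hq)]; ring
    obtain ⟨Q, hQ1, hQ2, hQ3, hQ4⟩ :=
      construct_Q ℙ hk₁ hA (by linarith : k₁ ≤ k₂) hbk₁ hsum
    refine ⟨Q, hQ1, hQ2, ?_, ?_⟩
    · filter_upwards [hQ3] with ω h
      rw [h]
      by_cases hω : ω ∈ A
      · rw [if_pos hω]; exact ⟨by linarith, le_rfl⟩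
      · rw [if_neg hω]; exact ⟨hbk₁, hbk₂⟩
    · rw [hQ4, ← hp, min_eq_left hc]
  · -- optimal value is k₁ * p + 1 - k₁
    push_neg at hc
    have hppos : 0 < p := by nlinarith
    set a := (1 - k₁ * (1 - p)) / p with ha
    have hak₁ : k₁ ≤ a := by
      rw [ha, le_div_iff₀ hppos]; nlinarith
    have hak₂ : a ≤ k₂ := by
      rw [ha, div_le_iff₀ hppos]; nlinarith
    have hap : a * p = 1 - k₁ * (1 - p) := by
      rw [ha, div_mul_cancel₀ _ (ne_of_gt hppos)]
    have hsum : a * (ℙ A).toReal + k₁ * (ℙ Aᶜ).toReal = 1 := by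
      rw [hpq, ← hp, hap]; ring
    obtain ⟨Q, hQ1, hQ2, hQ3, hQ4⟩ :=
      construct_Q ℙ hk₁ hA hak₁ le_rfl hsum
    refine ⟨Q, hQ1, hQ2, ?_, ?_⟩
    · filter_upwards [hQ3] with ω h
      rw [h]
      by_cases hω : ω ∈ A
      · rw [if_pos hω]; exact ⟨hak₁, hak₂⟩
      · rw [if_neg hω]; exact ⟨le_rfl, by linarith⟩
    · rw [hQ4, ← hp, hap, min_eq_right (le_of_lt hc)]; ring

/-- For likelihood-ratio uncertainty sets `𝓟(ℙ,k₁,k₂)` with constants `0 ≤ k₁ < 1 < k₂`: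
`sup_Q Q(A) = g(ℙ(A))` with `g(x) = min(k₂x, k₁x + 1 - k₁)`, and for any increasing
`Λ : ℝ → (0,1)`, `sup_Q ΛVaR^Q(X) = (g⁻¹∘Λ)VaR^ℙ(X)`, `ginv` being the inverse of `g`. -/
theorem stmt_15 {Ω : Type*} [MeasurableSpace Ω] (ℙ : Measure Ω)
    [IsProbabilityMeasure ℙ] [NullSingletonClass ℙ]
    (k₁ k₂ : ℝ) (hk₁ : 0 ≤ k₁) (hk₁1 : k₁ < 1) (hk₂ : 1 < k₂)
    (g ginv : ℝ → ℝ) (hg : ∀ x : ℝ, g x = min (k₂ * x) (k₁ * x + 1 - k₁))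
    (hginv : ∀ t ∈ Ico (0 : ℝ) 1, ginv t ∈ Icc (0 : ℝ) 1 ∧ g (ginv t) = t) :
    let Pset : Set (Measure Ω) := {Q | IsProbabilityMeasure Q ∧ Q ≪ ℙ ∧
      ∀ᵐ ω ∂ℙ, k₁ ≤ (Q.rnDeriv ℙ ω).toReal ∧ (Q.rnDeriv ℙ ω).toReal ≤ k₂}
    (∀ A : Set Ω, MeasurableSet A →
      (⨆ Q ∈ Pset, (Q A).toReal) = g ((ℙ A).toReal)) ∧
    ∀ (Λ : ℝ → ℝ), Monotone Λ → (∀ x, Λ x ∈ Ioo (0 : ℝ) 1) →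
      ∀ (X : Ω → ℝ), Measurable X →
        (⨆ Q ∈ Pset, LVaR (fun A => ((Q : Measure Ω) A).toReal) Λ X) =
          LVaR (fun A => (ℙ A).toReal) (fun x => ginv (Λ x)) X := by
  intro Pset
  have hk₂0 : (0:ℝ) ≤ k₂ := by linarith
  -- monotonicity of g
  have gmono : ∀ {u v : ℝ}, u ≤ v → g u ≤ g v := by
    intro u v huv
    rw [hg, hg]
    exact min_le_min (by nlinarith) (by nlinarith)
  constructor
  · -- Part 1
    intro A hA
    set p := (ℙ A).toReal with hp
    have hp0 : 0 ≤ p := ENNReal.toReal_nonneg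
    have hgp : g p = min (k₂ * p) (k₁ * p + 1 - k₁) := hg p
    have hgp0 : 0 ≤ g p := by
      rw [hgp]; exact le_min (by nlinarith) (by nlinarith)
    apply le_antisymm
    · refine Real.iSup_le (fun Q => Real.iSup_le (fun hQ => ?_) hgp0) hgp0
      obtain ⟨hQprob, hQac, hQbd⟩ := hQ
      rw [hgp]
      exact Q_le_minbound hQprob hk₁ hk₂0 hQac hQbd hA
    · obtain ⟨Q₀, h1, h2, h3, h4⟩ := exists_opt ℙ hk₁ hk₁1 hk₂ hA
      have hmem : Q₀ ∈ Pset := ⟨h1, h2, h3⟩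
      have hbdd : BddAbove (range fun Q : Measure Ω => ⨆ _ : Q ∈ Pset, (Q A).toReal) := by
        refine ⟨1, ?_⟩
        rintro x ⟨Q, rfl⟩
        refine Real.iSup_le (fun hQ => ?_) zero_le_one
        haveI := hQ.1
        calc (Q A).toReal ≤ (1 : ℝ≥0∞).toReal :=
              ENNReal.toReal_mono ENNReal.one_ne_top prob_le_one
          _ = 1 := ENNReal.toReal_one
      rw [hgp, ← h4]
      exact le_trans (le_of_eq (ciSup_pos (p := Q₀ ∈ Pset) (f := fun _ => (Q₀ A).toReal) hmem).symm) (le_ciSup hbdd Q₀)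
  · -- Part 2
    intro Λ hΛ hΛ01 X hX
    have hms : ∀ x : ℝ, MeasurableSet {ω | x < X ω} :=
      fun x => measurableSet_lt measurable_const hX
    apply le_antisymm
    · refine iSup₂_le fun Q hQ => ?_
      obtain ⟨hQprob, hQac, hQbd⟩ := hQ
      haveI := hQprob
      unfold LVaR
      apply sInf_le_sInf
      apply Set.image_mono
      intro x hx
      simp only [mem_setOf_eq] at hx ⊢
      have ht := hΛ01 x
      have hgi := hginv (Λ x) ⟨ht.1.le, ht.2⟩
      calc (Q {ω | x < X ω}).toReal
          ≤ min (k₂ * (ℙ {ω | x < X ω}).toReal) (k₁ * (ℙ {ω | x < X ω}).toReal + 1 - k₁) :=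
            Q_le_minbound hQprob hk₁ hk₂0 hQac hQbd (hms x)
        _ = g ((ℙ {ω | x < X ω}).toReal) := (hg _).symm
        _ ≤ g (ginv (Λ x)) := gmono hx
        _ = Λ x := hgi.2
    · by_contra hcon
      rw [not_le] at hcon
      obtain ⟨x, hx1, hx2⟩ := EReal.exists_between_coe_real hcon
      -- x is not in the ℙ-set
      have hxS : ¬ ((ℙ {ω | x < X ω}).toReal ≤ ginv (Λ x)) := by
        intro hmem
        have : LVaR (fun A => (ℙ A).toReal) (fun x => ginv (Λ x)) X ≤ (x : EReal) :=
          sInf_le (mem_image_of_mem _ hmem)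
        exact absurd (lt_of_le_of_lt this hx2) (lt_irrefl _)
      push_neg at hxS
      set px := (ℙ {ω | x < X ω}).toReal with hpx
      have ht := hΛ01 x
      have hgi := hginv (Λ x) ⟨ht.1.le, ht.2⟩
      -- Λ x < g px
      have hgt : Λ x < g px := by
        rw [hg]
        refine lt_min ?_ ?_
        · have h1 : Λ x ≤ k₂ * ginv (Λ x) := by
            conv_lhs => rw [← hgi.2, hg]
            exact min_le_left _ _
          have := mul_lt_mul_of_pos_left hxS (by linarith : (0:ℝ) < k₂)
          linarith
        · rcases eq_or_lt_of_le hk₁ with h0 | h0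
          · have : k₁ * px + 1 - k₁ = 1 := by rw [← h0]; ring
            rw [this]; exact ht.2
          · have h1 : Λ x ≤ k₁ * ginv (Λ x) + 1 - k₁ := by
              conv_lhs => rw [← hgi.2, hg]
              exact min_le_right _ _
            have := mul_lt_mul_of_pos_left hxS h0
            linarith
      obtain ⟨Q₀, h1, h2, h3, h4⟩ := exists_opt ℙ hk₁ hk₁1 hk₂ (hms x)
      haveI := h1
      have hmem : Q₀ ∈ Pset := ⟨h1, h2, h3⟩
      have hQval : Λ x < (Q₀ {ω | x < X ω}).toReal := by
        rw [h4, ← hg, ← hpx]; exact hgt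
      have hlow : (x : EReal) ≤ LVaR (fun A => (Q₀ A).toReal) Λ X := by
        unfold LVaR
        apply le_sInf
        rintro y ⟨z, hz, rfl⟩
        simp only [mem_setOf_eq] at hz
        rw [EReal.coe_le_coe_iff]
        by_contra hzx
        push_neg at hzx
        have hsub : {ω | x < X ω} ⊆ {ω | z < X ω} :=
          fun ω h => lt_of_le_of_lt hzx.le h
        have hmono : (Q₀ {ω | x < X ω}).toReal ≤ (Q₀ {ω | z < X ω}).toReal :=
          ENNReal.toReal_mono (measure_ne_top _ _) (measure_mono hsub)
        have hΛz := hΛ hzx.le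
        linarith
      have : (x : EReal) ≤ ⨆ Q ∈ Pset, LVaR (fun A => ((Q : Measure Ω) A).toReal) Λ X :=
        hlow.trans (le_iSup₂ (f := fun Q (_ : Q ∈ Pset) =>
          LVaR (fun A => ((Q : Measure Ω) A).toReal) Λ X) Q₀ hmem)
      exact absurd this (not_le.mpr hx1)
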